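/- Fix s < t, a minimum value m̂, an upper bound υ > m̂, and y ∈ (m̂, υ]. For j ≥ 1 define ψⱼ(y) = (2|υ−m̂|j − (y−m̂))·exp(−2|υ−m̂|j(|υ−m̂|j − (y−m̂))/(t−s)) and χⱼ(y) = (2|υ−m̂|j + (y−m̂))·exp(−2|υ−m̂|j(|υ−m̂|j + (y−m̂))/(t−s)). Then for all j ≥ 1, ψⱼ(y) ≥ 0 and χⱼ(y) ≥ 0, and for all j ≥ k̂ := √((t−s) + |υ−m̂|²)/(2|υ−m̂|), one has ψⱼ(y) ≥ χⱼ(y) ≥ ψ_{j+1}(y); consequently the partial sums S_{2k} = 1 − (y−m̂)^{-1} Σ_{j=1}^{k}(ψⱼ − χⱼ) and S_{2k+1} = S_{2k} − (y−m̂)^{-1}ψ_{k+1}, for k ≥ k̂, form an alternating decreasing-gap sequence bracketing the Bessel-bridge containment probability δ. -/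

import Mathlib

open Real

private lemma core1 {T b c : ℝ} (hT : 0 < T) (hb : 0 ≤ b) (hbc : 2*b ≤ c)
    (h : T ≤ c^2 - b^2) : c + b ≤ (c - b) * Real.exp (2*c*b/T) := by
  have hD : 0 < c^2 - b^2 := lt_of_lt_of_le hT h
  have hc : 0 < c := by nlinarith
  have hcb : b < c := by nlinarith
  set u := 2*c*b/(c^2-b^2) with hu
  have hu0 : 0 ≤ u := by positivity
  have h1 : u ≤ 2*c*b/T := div_le_div_of_nonneg_left (by positivity) hT h
  have h2 : 1 + u + u^2/2 ≤ Real.exp u := Real.quadratic_le_exp_of_nonneg hu0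
  have h3 : Real.exp u ≤ Real.exp (2*c*b/T) := Real.exp_le_exp.mpr h1
  have hkey : (c - b) * (1 + u + u^2/2) - (c + b) = 2*b^4*(c-b) / (c^2-b^2)^2 := by
    rw [hu]; field_simp; ring
  have hpos : 0 ≤ 2*b^4*(c-b) / (c^2-b^2)^2 :=
    div_nonneg (by nlinarith [pow_nonneg hb 4]) (by positivity)
  nlinarith [mul_le_mul_of_nonneg_left (h2.trans h3) (sub_pos.mpr hcb).le]

private lemma core2 {T a b c : ℝ} (hT : 0 < T) (hb : 0 ≤ b) (hba : b ≤ a) (hc : 0 ≤ c)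
    (h : T ≤ c^2) : c + 2*a - b ≤ (c + b) * Real.exp (2*(c+a)*(a-b)/T) := by
  have ha : 0 ≤ a := hb.trans hba
  have hTa : T ≤ (c+b)*(c+a) := by nlinarith
  have he := Real.add_one_le_exp (2*(c+a)*(a-b)/T)
  have hcb : 0 ≤ c + b := by linarith
  have h2 : (c+b) * (2*(c+a)*(a-b)/T + 1) ≤ (c+b) * Real.exp (2*(c+a)*(a-b)/T) :=
    mul_le_mul_of_nonneg_left he hcb
  have h3 : 2*(a-b) ≤ (c+b) * (2*(c+a)*(a-b)/T) := by
    rw [mul_div_assoc', le_div_iff₀ hT]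
    nlinarith [mul_nonneg (sub_nonneg.2 hba) (sub_nonneg.2 hTa)]
  nlinarith

/-- Bessel bridge series: with `ψⱼ` and `χⱼ` as in the series for the probability `δ` that a
Bessel bridge from `(s,m̂)` to `(t,y)` with minimum `m̂` stays in `[m̂,υ]`, all terms with `j ≥ 1`
are nonnegative, and for `j ≥ k̂ := √((t−s)+|υ−m̂|²)/(2|υ−m̂|)` one has `ψⱼ ≥ χⱼ ≥ ψ_{j+1}`;
consequently for `k ≥ k̂` the partial sums `S_{2k}` and `S_{2k+1} = S_{2k} − ψ_{k+1}/(y−m̂)`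
bracket `δ`. -/
theorem stmt5 (s t mhat υ y : ℝ) (hst : s < t) (hv : mhat < υ) (hy : y ∈ Set.Ioc mhat υ)
    (ψ χ : ℕ → ℝ)
    (hψ : ∀ j : ℕ, ψ j = (2 * |υ - mhat| * j - (y - mhat)) *
      Real.exp (-2 * |υ - mhat| * j * (|υ - mhat| * j - (y - mhat)) / (t - s)))
    (hχ : ∀ j : ℕ, χ j = (2 * |υ - mhat| * j + (y - mhat)) *
      Real.exp (-2 * |υ - mhat| * j * (|υ - mhat| * j + (y - mhat)) / (t - s)))
    (δ : ℝ) (hδ : HasSum (fun j : ℕ => (ψ (j + 1) - χ (j + 1)) / (y - mhat)) (1 - δ)) :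
    (∀ j : ℕ, 1 ≤ j → 0 ≤ ψ j ∧ 0 ≤ χ j) ∧
    (∀ j : ℕ, Real.sqrt ((t - s) + |υ - mhat| ^ 2) / (2 * |υ - mhat|) ≤ (j : ℝ) →
      χ j ≤ ψ j ∧ ψ (j + 1) ≤ χ j) ∧
    (∀ k : ℕ, Real.sqrt ((t - s) + |υ - mhat| ^ 2) / (2 * |υ - mhat|) ≤ (k : ℝ) →
      (1 - (∑ j ∈ Finset.range k, (ψ (j + 1) - χ (j + 1))) / (y - mhat)) - ψ (k + 1) / (y - mhat) ≤ δ ∧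
      δ ≤ 1 - (∑ j ∈ Finset.range k, (ψ (j + 1) - χ (j + 1))) / (y - mhat)) := by
  obtain ⟨hy1, hy2⟩ := hy
  set A := |υ - mhat| with hA
  have hAv : A = υ - mhat := abs_of_pos (by linarith)
  have hA0 : 0 < A := by rw [hAv]; linarith
  set b := y - mhat with hbdef
  set T := t - s with hTdef
  have hb0 : 0 < b := by rw [hbdef]; linarith
  have hbA : b ≤ A := by rw [hAv, hbdef]; linarith
  have hT : 0 < T := by rw [hTdef]; linarith
  -- Part 1
  have part1 : ∀ j : ℕ, 1 ≤ j → 0 ≤ ψ j ∧ 0 ≤ χ j := by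
    intro j hj
    have hj1 : (1:ℝ) ≤ (j : ℝ) := by exact_mod_cast hj
    constructor
    · rw [hψ j]
      apply mul_nonneg _ (Real.exp_pos _).le
      nlinarith
    · rw [hχ j]
      apply mul_nonneg _ (Real.exp_pos _).le
      nlinarith
  -- consequences of the `k̂` bound
  have key : ∀ j : ℕ, Real.sqrt (T + A ^ 2) / (2 * A) ≤ (j : ℝ) →
      1 ≤ j ∧ T + A ^ 2 ≤ (2 * A * j) ^ 2 := by
    intro j hj
    have h1 : Real.sqrt (T + A ^ 2) ≤ 2 * A * j := by
      rw [div_le_iff₀ (by positivity)] at hj; linarith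
    have h2 : T + A ^ 2 ≤ (2 * A * j) ^ 2 := by
      nlinarith [Real.sq_sqrt (show (0:ℝ) ≤ T + A ^ 2 by positivity),
        Real.sqrt_nonneg (T + A ^ 2)]
    refine ⟨?_, h2⟩
    rcases Nat.eq_zero_or_pos j with h0 | h0
    · exfalso; rw [h0] at h2; push_cast at h2; nlinarith
    · exact h0
  -- Part 2
  have part2 : ∀ j : ℕ, Real.sqrt (T + A ^ 2) / (2 * A) ≤ (j : ℝ) →
      χ j ≤ ψ j ∧ ψ (j + 1) ≤ χ j := by
    intro j hj
    obtain ⟨hj1, h2⟩ := key j hj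
    have hj1' : (1:ℝ) ≤ (j : ℝ) := by exact_mod_cast hj1
    constructor
    · -- χ j ≤ ψ j
      rw [hψ j, hχ j]
      have hc1 : 2 * b ≤ 2 * A * (j : ℝ) := by nlinarith
      have hc2 : T ≤ (2 * A * (j : ℝ)) ^ 2 - b ^ 2 := by nlinarith
      have main := core1 hT hb0.le hc1 hc2
      have hexpeq : -2 * A * (j : ℝ) * (A * j - b) / T =
          2 * (2 * A * (j : ℝ)) * b / T + -2 * A * (j : ℝ) * (A * j + b) / T := by
        field_simp; ring
      rw [hexpeq, Real.exp_add, ← mul_assoc]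
      exact mul_le_mul_of_nonneg_right main (Real.exp_pos _).le
    · -- ψ (j+1) ≤ χ j
      rw [hψ (j + 1), hχ j]
      have hcast : ((j + 1 : ℕ) : ℝ) = (j : ℝ) + 1 := by push_cast; ring
      rw [hcast]
      have hc3 : T ≤ (2 * A * (j : ℝ)) ^ 2 := by nlinarith
      have main := core2 (a := A) hT hb0.le hbA (by positivity) hc3
      have hexpeq2 : -2 * A * ((j : ℝ) + 1) * (A * ((j : ℝ) + 1) - b) / T =
          -(2 * (2 * A * (j : ℝ) + A) * (A - b) / T) + -2 * A * (j : ℝ) * (A * j + b) / T := by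
        field_simp; ring
      rw [hexpeq2, Real.exp_add, ← mul_assoc]
      apply mul_le_mul_of_nonneg_right _ (Real.exp_pos _).le
      have heq : 2 * A * ((j : ℝ) + 1) - b = 2 * A * (j : ℝ) + 2 * A - b := by ring
      rw [heq]
      calc (2 * A * (j : ℝ) + 2 * A - b) *
              Real.exp (-(2 * (2 * A * (j : ℝ) + A) * (A - b) / T))
          ≤ ((2 * A * (j : ℝ) + b) * Real.exp (2 * (2 * A * (j : ℝ) + A) * (A - b) / T)) *
              Real.exp (-(2 * (2 * A * (j : ℝ) + A) * (A - b) / T)) :=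
            mul_le_mul_of_nonneg_right main (Real.exp_pos _).le
        _ = 2 * A * (j : ℝ) + b := by rw [mul_assoc, ← Real.exp_add]; simp
  -- Part 3
  refine ⟨part1, part2, ?_⟩
  intro k hk
  obtain ⟨hk1, -⟩ := key k hk
  set g : ℕ → ℝ := fun j => (ψ (j + 1) - χ (j + 1)) / b with hg
  have hsum : Summable g := hδ.summable
  have hsplit : ∑ i ∈ Finset.range k, g i + ∑' i, g (i + k) = 1 - δ := by
    rw [Summable.sum_add_tsum_nat_add k hsum, hδ.tsum_eq]
  have hcond : ∀ i : ℕ, Real.sqrt (T + A ^ 2) / (2 * A) ≤ ((i + k + 1 : ℕ) : ℝ) := by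
    intro i
    push_cast
    have : (0:ℝ) ≤ (i : ℝ) := Nat.cast_nonneg i
    linarith
  have htail_nonneg : ∀ i : ℕ, 0 ≤ g (i + k) := by
    intro i
    show 0 ≤ (ψ (i + k + 1) - χ (i + k + 1)) / b
    exact div_nonneg (sub_nonneg.2 (part2 (i + k + 1) (hcond i)).1) hb0.le
  have hR0 : 0 ≤ ∑' i : ℕ, g (i + k) := tsum_nonneg htail_nonneg
  have hR1 : (∑' i : ℕ, g (i + k)) ≤ ψ (k + 1) / b := by
    apply Summable.tsum_le_of_sum_range_le ((summable_nat_add_iff k).2 hsum)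
    intro n
    have step : ∀ i ∈ Finset.range n, g (i + k) ≤ (ψ (i + k + 1) - ψ (i + 1 + k + 1)) / b := by
      intro i _
      show (ψ (i + k + 1) - χ (i + k + 1)) / b ≤ (ψ (i + k + 1) - ψ (i + 1 + k + 1)) / b
      apply div_le_div_of_nonneg_right _ hb0.le
      have h2 := (part2 (i + k + 1) (hcond i)).2
      have hidx : i + 1 + k + 1 = i + k + 1 + 1 := by omega
      rw [hidx]
      linarith
    calc ∑ i ∈ Finset.range n, g (i + k)
        ≤ ∑ i ∈ Finset.range n, (ψ (i + k + 1) - ψ (i + 1 + k + 1)) / b :=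
          Finset.sum_le_sum step
      _ = (∑ i ∈ Finset.range n,
            ((fun m => ψ (m + k + 1)) i - (fun m => ψ (m + k + 1)) (i + 1))) / b := by
          rw [Finset.sum_div]
      _ = (ψ (0 + k + 1) - ψ (n + k + 1)) / b := by
          rw [Finset.sum_range_sub' (fun m => ψ (m + k + 1)) n]
      _ ≤ ψ (k + 1) / b := by
          have h0 : (0:ℕ) + k + 1 = k + 1 := by omega
          rw [h0]
          have hnn := (part1 (n + k + 1) (by omega)).1
          apply div_le_div_of_nonneg_right _ hb0.le
          linarith
  have hSeq : ∑ i ∈ Finset.range k, g i =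
      (∑ j ∈ Finset.range k, (ψ (j + 1) - χ (j + 1))) / b := (Finset.sum_div _ _ _).symm
  rw [hSeq] at hsplit
  constructor <;> linarith
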